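/- Let τ be a T₁ topology on B_ω^{F_n} making it a semitopological semigroup (all left and right translations continuous). Then every nonzero element of B_ω^{F_n} is an isolated point of (B_ω^{F_n}, τ). -/

import Mathlib

abbrev B (n : ℕ) : Type := Option (ℕ × ℕ × Fin (n + 1))

/-- Multiplication of the semigroup `B_ω^{F_n}`: triples `(i,j,[0;k])` plus an absorbing
zero (`none`), with the bicyclic-extension multiplication. -/
def Bmul (n : ℕ) : B n → B n → B n
  | some (i1, j1, k1), some (i2, j2, k2) =>
    if j1 ≤ i2 then
      if i2 ≤ j1 + k1.val then
        some (i1 - j1 + i2, j2, ⟨min (j1 + k1.val - i2) k2.val,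
          lt_of_le_of_lt (min_le_right _ _) k2.isLt⟩)
      else none
    else
      if j1 ≤ i2 + k2.val then
        some (i1, j1 - i2 + j2, ⟨min k1.val (i2 + k2.val - j1),
          lt_of_le_of_lt (min_le_left _ _) k1.isLt⟩)
      else none
  | _, _ => none

lemma Bmul_eq (n i1 j1 i2 j2 : ℕ) (k1 k2 : Fin (n+1)) :
    Bmul n (some (i1, j1, k1)) (some (i2, j2, k2)) =
    if j1 ≤ i2 then
      if i2 ≤ j1 + k1.val then
        some (i1 - j1 + i2, j2, ⟨min (j1 + k1.val - i2) k2.val,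
          lt_of_le_of_lt (min_le_right _ _) k2.isLt⟩)
      else none
    else
      if j1 ≤ i2 + k2.val then
        some (i1, j1 - i2 + j2, ⟨min k1.val (i2 + k2.val - j1),
          lt_of_le_of_lt (min_le_left _ _) k1.isLt⟩)
      else none := rfl

lemma Bmul_none_left (n : ℕ) (y : B n) : Bmul n none y = none := by cases y <;> rfl

lemma Bmul_none_right (n : ℕ) (y : B n) : Bmul n y none = none := by cases y <;> rfl

lemma Bmul_range' (n i j : ℕ) (k : Fin (n+1)) (x : B n) :
    Bmul n (Bmul n (some (i,i,k)) x) (some (j,j,k)) = none ∨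
    ∃ p q m, Bmul n (Bmul n (some (i,i,k)) x) (some (j,j,k)) = some (p,q,m)
      ∧ p ≤ i + j + n ∧ q ≤ j + n := by
  have hk := k.isLt
  cases x with
  | none => left; rw [Bmul_none_right, Bmul_none_left]
  | some t =>
    obtain ⟨p, q, m⟩ := t
    have hm := m.isLt
    rw [Bmul_eq]
    split_ifs with h1 h2 h3 <;>
      first
      | (left; rw [Bmul_none_left])
      | (rw [Bmul_eq]
         split_ifs with h4 h5 h6 <;>
           first
           | (left; rfl)
           | (right
              refine ⟨_, _, _, rfl, ?_, ?_⟩ <;>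
                  ((try simp only [Fin.val_mk] at h1 h2 h3 h4 h5 h6); omega)))

lemma Bmul_fiber (n i j u v : ℕ) (k w : Fin (n+1)) (x : B n)
    (h : Bmul n (Bmul n (some (i,i,k)) x) (some (j,j,k)) = some (u,v,w)) :
    ∃ p q m, x = some (p,q,m) ∧ p ≤ i + n ∧ q ≤ j + n := by
  have hk := k.isLt
  cases x with
  | none =>
    rw [Bmul_none_right, Bmul_none_left] at h; exact absurd h (by simp)
  | some t =>
    obtain ⟨p, q, m⟩ := t
    have hm := m.isLt
    refine ⟨p, q, m, rfl, ?_, ?_⟩ <;>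
    · rw [Bmul_eq] at h
      split_ifs at h with h1 h2 h3 <;>
        first
        | (rw [Bmul_none_left] at h; exact absurd h (by simp))
        | (rw [Bmul_eq] at h
           split_ifs at h with h4 h5 h6 <;>
             first
             | exact Option.noConfusion h
             | ((try simp only [Fin.val_mk] at h1 h2 h3 h4 h5 h6); omega))

lemma Bmul_ne_none (n i j : ℕ) (k : Fin (n+1)) :
    Bmul n (Bmul n (some (i,i,k)) (some (i,j,k))) (some (j,j,k)) ≠ none := by
  rw [Bmul_eq, if_pos le_rfl, if_pos (Nat.le_add_right _ _), Bmul_eq,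
    if_pos le_rfl, if_pos (Nat.le_add_right _ _)]
  simp

theorem nonzero_isolated (n : ℕ) [TopologicalSpace (B n)] [T1Space (B n)]
    (hl : ∀ a : B n, Continuous (fun x => Bmul n a x))
    (hr : ∀ a : B n, Continuous (fun x => Bmul n x a)) :
    ∀ a : B n, a ≠ none → IsOpen ({a} : Set (B n)) := by
  rintro a ha
  obtain ⟨⟨i, j, k⟩, rfl⟩ : ∃ t, a = some t := Option.ne_none_iff_exists'.mp ha
  set g : B n → B n := fun x => Bmul n (Bmul n (some (i,i,k)) x) (some (j,j,k)) with hg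
  have hgc : Continuous g := (hr (some (j,j,k))).comp (hl (some (i,i,k)))
  set c : B n := g (some (i,j,k)) with hc
  obtain ⟨⟨u, v, w⟩, hcw⟩ : ∃ t, c = some t :=
    Option.ne_none_iff_exists'.mp (Bmul_ne_none n i j k)
  -- the fiber S is finite
  have hSfin : (g ⁻¹' {c}).Finite := by
    apply Set.Finite.subset
      (Set.Finite.image some (((Set.finite_Iic (i+n)).prod
        ((Set.finite_Iic (j+n)).prod (Set.finite_univ (α := Fin (n+1)))))))
    rintro x hx
    simp only [Set.mem_preimage, Set.mem_singleton_iff] at hx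
    obtain ⟨p, q, m, rfl, hp, hq⟩ := Bmul_fiber n i j u v k w x (by rw [← hcw]; exact hx)
    exact ⟨(p, q, m), ⟨hp, hq, trivial⟩, rfl⟩
  -- the range of g is finite
  have hRfin : (Set.range g).Finite := by
    apply Set.Finite.subset
      (Set.Finite.insert none ((Set.Finite.image some (((Set.finite_Iic (i+j+n)).prod
        ((Set.finite_Iic (j+n)).prod (Set.finite_univ (α := Fin (n+1)))))))))
    rintro y ⟨x, rfl⟩
    change Bmul n (Bmul n (some (i,i,k)) x) (some (j,j,k)) ∈ _
    rcases Bmul_range' n i j k x with h | ⟨p, q, m, h, hp, hq⟩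
    · rw [h]; exact Set.mem_insert _ _
    · rw [h]; exact Set.mem_insert_of_mem _ ⟨(p,q,m), ⟨hp, hq, trivial⟩, rfl⟩
  -- the fiber S is open
  have hSopen : IsOpen (g ⁻¹' {c}) := by
    have : g ⁻¹' {c} = g ⁻¹' ((Set.range g \ {c})ᶜ) := by
      ext x
      simp only [Set.mem_preimage, Set.mem_singleton_iff, Set.mem_compl_iff, Set.mem_diff,
        Set.mem_range, not_and, not_not]
      constructor
      · intro h _; exact h
      · intro h; exact h ⟨x, rfl⟩
    rw [this]
    exact ((hRfin.diff (t := {c})).isClosed.isOpen_compl).preimage hgc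
  have haS : some (i,j,k) ∈ g ⁻¹' {c} := rfl
  have : ({some (i,j,k)} : Set (B n)) = g ⁻¹' {c} \ (g ⁻¹' {c} \ {some (i,j,k)}) := by
    ext x
    simp only [Set.mem_singleton_iff, Set.mem_diff, Set.mem_preimage, Set.mem_singleton_iff,
      not_and, not_not]
    constructor
    · rintro rfl; exact ⟨haS, fun _ => rfl⟩
    · rintro ⟨h1, h2⟩; exact h2 h1
  rw [this]
  exact hSopen.sdiff (hSfin.diff (t := _)).isClosed
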